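/- (Alicki–Fannes ergotropy identity, single-copy upper bound) Let H be Hermitian with ground energy 0, β > 0, τ_β = e^{-βH}/Z. For any density matrix ρ and any unitary U, Tr(Hρ) - Tr(H UρU†) ≤ (1/β) S(ρ‖τ_β); moreover when β = β* is chosen so that S(τ_{β*}) = S(ρ), the quantity (1/β*) S(ρ‖τ_{β*}) = Tr(Hρ) - Tr(H τ_{β*}), i.e. the bound equals the energy gap between ρ and the iso-entropic Gibbs state. -/

import Mathlib

open Matrix BigOperators Finset
open scoped Kronecker ComplexOrder

noncomputable section

variable {n : Type*} [Fintype n] [DecidableEq n]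

/-- Functional calculus for Hermitian matrices (junk value `0` otherwise). -/
def matFun (f : ℝ → ℝ) (A : Matrix n n ℂ) : Matrix n n ℂ :=
  if hA : A.IsHermitian then
    (hA.eigenvectorUnitary : Matrix n n ℂ) *
      Matrix.diagonal (fun i => (f (hA.eigenvalues i) : ℂ)) *
      star (hA.eigenvectorUnitary : Matrix n n ℂ)
  else 0

/-- Von Neumann entropy (natural log). -/
def vnEntropy (A : Matrix n n ℂ) : ℝ :=
  if hA : A.IsHermitian then ∑ i, Real.negMulLog (hA.eigenvalues i) else 0

/-- Umegaki relative entropy `Tr ρ (log ρ - log σ)`. -/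
def relEnt (ρ σ : Matrix n n ℂ) : ℝ :=
  ((ρ * (matFun Real.log ρ - matFun Real.log σ)).trace).re

/-- Partition function `Z = Tr e^{-βH}`. -/
def gibbsZ (β : ℝ) (H : Matrix n n ℂ) : ℝ :=
  ((matFun (fun x => Real.exp (-(β * x))) H).trace).re

/-- Gibbs (thermal) state `e^{-βH}/Z`. -/
def gibbs (β : ℝ) (H : Matrix n n ℂ) : Matrix n n ℂ :=
  ((gibbsZ β H : ℂ)⁻¹) • matFun (fun x => Real.exp (-(β * x))) H

/-- Density matrix predicate. -/
def IsDensity (ρ : Matrix n n ℂ) : Prop := ρ.PosSemidef ∧ ρ.trace = 1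

def IsUnitaryMat (U : Matrix n n ℂ) : Prop := U ∈ Matrix.unitaryGroup n ℂ

/-- Outer product `|v⟩⟨v|`. -/
def outer {m : Type*} (v : m → ℂ) : Matrix m m ℂ :=
  Matrix.of fun i j => v i * (starRingEnd ℂ) (v j)

/-- Unnormalized maximally entangled vector `∑ₓ |x⟩|x⟩`. -/
def maxEnt (d : ℕ) : Fin d × Fin d → ℂ := fun p => if p.1 = p.2 then 1 else 0

/-- Positive square root of a Hermitian matrix (via eigenvalues). -/
def matSqrt (A : Matrix n n ℂ) : Matrix n n ℂ := matFun Real.sqrt A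

/-- Partial trace over the first tensor factor. -/
def ptraceFst {m k : Type*} [Fintype m] (ρ : Matrix (m × k) (m × k) ℂ) : Matrix k k ℂ :=
  Matrix.of fun j1 j2 => ∑ i, ρ (i, j1) (i, j2)

/-- Partial trace over the second tensor factor. -/
def ptraceSnd {m k : Type*} [Fintype k] (ρ : Matrix (m × k) (m × k) ℂ) : Matrix m m ℂ :=
  Matrix.of fun i1 i2 => ∑ j, ρ (i1, j) (i2, j)



lemma star_mul_self_eq_one {V : Matrix n n ℂ} (hV : V ∈ Matrix.unitaryGroup n ℂ) :
    star V * V = 1 := (Matrix.mem_unitaryGroup_iff').mp hV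

lemma mul_star_self_eq_one {V : Matrix n n ℂ} (hV : V ∈ Matrix.unitaryGroup n ℂ) :
    V * star V = 1 := (Matrix.mem_unitaryGroup_iff).mp hV

lemma trace_unitary_conj {V : Matrix n n ℂ} (hV : V ∈ Matrix.unitaryGroup n ℂ)
    (D : Matrix n n ℂ) : (V * D * star V).trace = D.trace := by
  rw [Matrix.trace_mul_cycle, star_mul_self_eq_one hV, Matrix.one_mul]

lemma conj_diag_isHermitian {V : Matrix n n ℂ} (hV : V ∈ Matrix.unitaryGroup n ℂ) (d : n → ℝ) :
    (V * Matrix.diagonal (fun i => (d i : ℂ)) * star V).IsHermitian := by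
  have hD : (Matrix.diagonal (fun i => (d i : ℂ)))ᴴ = Matrix.diagonal (fun i => (d i : ℂ)) := by
    ext i j
    by_cases h : i = j
    · subst h; simp [Matrix.conjTranspose_apply, Matrix.diagonal_apply_eq, Complex.conj_ofReal]
    · simp [Matrix.conjTranspose_apply, Matrix.diagonal_apply_ne _ h,
        Matrix.diagonal_apply_ne _ (Ne.symm h)]
  show _ = _
  rw [Matrix.conjTranspose_mul, Matrix.conjTranspose_mul, hD, Matrix.star_eq_conjTranspose,
    Matrix.conjTranspose_conjTranspose, Matrix.mul_assoc]

lemma pow_unitary_conj {V : Matrix n n ℂ} (hV : V ∈ Matrix.unitaryGroup n ℂ)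
    (D : Matrix n n ℂ) (k : ℕ) :
    (V * D * star V) ^ k = V * D ^ k * star V := by
  induction k with
  | zero => simp [mul_star_self_eq_one hV]
  | succ k ih =>
      rw [pow_succ, ih, pow_succ]
      simp only [Matrix.mul_assoc]
      rw [← Matrix.mul_assoc (star V) V, star_mul_self_eq_one hV, Matrix.one_mul]

lemma aeval_unitary_conj (p : Polynomial ℂ) {V : Matrix n n ℂ}
    (hV : V ∈ Matrix.unitaryGroup n ℂ) (D : Matrix n n ℂ) :
    Polynomial.aeval (V * D * star V) p = V * (Polynomial.aeval D p : Matrix n n ℂ) * star V := by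
  induction p using Polynomial.induction_on' with
  | add p q hp hq => simp [hp, hq, Matrix.mul_add, Matrix.add_mul]
  | monomial k a =>
      rw [Polynomial.aeval_monomial, Polynomial.aeval_monomial, pow_unitary_conj hV,
        ← Matrix.mul_assoc V, ← Algebra.commutes a V]
      simp only [Matrix.mul_assoc]

lemma aeval_diagonal (p : Polynomial ℂ) (v : n → ℂ) :
    Polynomial.aeval (Matrix.diagonal v) p
      = Matrix.diagonal (fun i => Polynomial.aeval (v i) p) := by
  induction p using Polynomial.induction_on' with
  | add p q hp hq => simp [hp, hq, Matrix.diagonal_add]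
  | monomial k a =>
      simp only [Polynomial.aeval_monomial, Matrix.diagonal_pow]
      simp [Matrix.algebraMap_eq_diagonal, Matrix.diagonal_mul_diagonal]

lemma matFun_eq (f : ℝ → ℝ) {A : Matrix n n ℂ} (hA : A.IsHermitian) :
    matFun f A = (hA.eigenvectorUnitary : Matrix n n ℂ) *
      Matrix.diagonal (fun i => (f (hA.eigenvalues i) : ℂ)) *
      star (hA.eigenvectorUnitary : Matrix n n ℂ) := by
  rw [matFun, dif_pos hA]

lemma spectral_theorem' {A : Matrix n n ℂ} (hA : A.IsHermitian) :
    A = (hA.eigenvectorUnitary : Matrix n n ℂ) *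
      Matrix.diagonal (fun i => (hA.eigenvalues i : ℂ)) *
      star (hA.eigenvectorUnitary : Matrix n n ℂ) := hA.spectral_theorem

lemma matFun_conj (f : ℝ → ℝ) {V : Matrix n n ℂ} (hV : V ∈ Matrix.unitaryGroup n ℂ)
    (e : n → ℝ) :
    matFun f (V * Matrix.diagonal (fun i => (e i : ℂ)) * star V)
      = V * Matrix.diagonal (fun i => (f (e i) : ℂ)) * star V := by
  set A := V * Matrix.diagonal (fun i => (e i : ℂ)) * star V with hAdef
  have hA : A.IsHermitian := conj_diag_isHermitian hV e
  rw [matFun_eq f hA]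
  set s : Finset ℝ := (Finset.univ.image hA.eigenvalues) ∪ (Finset.univ.image e) with hs
  set p : Polynomial ℝ := Lagrange.interpolate s id f with hp
  have hnode : ∀ x ∈ s, p.eval x = f x := by
    intro x hx
    exact Lagrange.eval_interpolate_at_node f (Set.injOn_id _) hx
  have key : ∀ (W : Matrix n n ℂ), W ∈ Matrix.unitaryGroup n ℂ → ∀ (g : n → ℝ),
      A = W * Matrix.diagonal (fun i => (g i : ℂ)) * star W →
      Polynomial.aeval A (p.map (algebraMap ℝ ℂ))
        = W * Matrix.diagonal (fun i => ((p.eval (g i) : ℝ) : ℂ)) * star W := by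
    intro W hW g hAW
    rw [hAW, aeval_unitary_conj _ hW, aeval_diagonal]
    have hfun : (fun i => (Polynomial.aeval ((g i : ℂ))) (p.map (algebraMap ℝ ℂ)))
        = fun i => ((p.eval (g i) : ℝ) : ℂ) := by
      funext i
      rw [Polynomial.aeval_map_algebraMap]
      exact Polynomial.aeval_algebraMap_apply_eq_algebraMap_eval (g i) p
    rw [hfun]
  have h1 := key V hV e hAdef
  have h2 := key _ (hA.eigenvectorUnitary).prop hA.eigenvalues (spectral_theorem' hA)
  have e1 : (fun i => ((p.eval (hA.eigenvalues i) : ℝ) : ℂ))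
      = fun i => ((f (hA.eigenvalues i) : ℝ) : ℂ) := by
    funext i
    rw [hnode _ (Finset.mem_union_left _ (Finset.mem_image_of_mem _ (Finset.mem_univ i)))]
  have e2 : (fun i => ((p.eval (e i) : ℝ) : ℂ)) = fun i => ((f (e i) : ℝ) : ℂ) := by
    funext i
    rw [hnode _ (Finset.mem_union_right _ (Finset.mem_image_of_mem _ (Finset.mem_univ i)))]
  rw [← e1, ← e2, ← h2, ← h1]

lemma trace_conj_diag {V : Matrix n n ℂ} (hV : V ∈ Matrix.unitaryGroup n ℂ) (v : n → ℂ) :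
    (V * Matrix.diagonal v * star V).trace = ∑ i, v i := by
  rw [trace_unitary_conj hV, Matrix.trace_diagonal]

lemma conj_mul_conj_same {V : Matrix n n ℂ} (hV : V ∈ Matrix.unitaryGroup n ℂ)
    (v w : n → ℂ) :
    (V * Matrix.diagonal v * star V) * (V * Matrix.diagonal w * star V)
      = V * Matrix.diagonal (fun i => v i * w i) * star V := by
  simp only [Matrix.mul_assoc]
  rw [← Matrix.mul_assoc (star V) V, star_mul_self_eq_one hV, Matrix.one_mul,
    ← Matrix.mul_assoc (Matrix.diagonal v), Matrix.diagonal_mul_diagonal]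

lemma trace_diag_conj_diag_conj (v' w' : n → ℂ) (W : Matrix n n ℂ) :
    (Matrix.diagonal v' * (W * (Matrix.diagonal w' * star W))).trace
      = ∑ i, ∑ j, v' i * (W i j * (w' j * star (W i j))) := by
  rw [Matrix.trace]
  congr 1
  funext i
  rw [Matrix.diag_apply, Matrix.diagonal_mul, Matrix.mul_apply, Finset.mul_sum]
  congr 1
  funext j
  rw [Matrix.diagonal_mul, Matrix.star_apply]

lemma trace_conj_mul_conj {A B : Matrix n n ℂ} (hA : A ∈ Matrix.unitaryGroup n ℂ)
    (hB : B ∈ Matrix.unitaryGroup n ℂ) (v w : n → ℂ) :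
    ((A * Matrix.diagonal v * star A) * (B * Matrix.diagonal w * star B)).trace
      = ∑ i, ∑ j, v i * ((star A * B) i j * (w j * star ((star A * B) i j))) := by
  have h1 : (A * Matrix.diagonal v * star A) * (B * Matrix.diagonal w * star B)
      = A * (Matrix.diagonal v * (star A * (B * (Matrix.diagonal w * star B)))) := by
    simp only [Matrix.mul_assoc]
  rw [h1, Matrix.trace_mul_comm A]
  have h2 : Matrix.diagonal v * (star A * (B * (Matrix.diagonal w * star B))) * A
      = Matrix.diagonal v * ((star A * B) * (Matrix.diagonal w * star (star A * B))) := by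
    simp only [Matrix.star_mul, star_star, Matrix.mul_assoc]
  rw [h2, trace_diag_conj_diag_conj]

lemma re_trace_conj_mul_conj {A B : Matrix n n ℂ} (hA : A ∈ Matrix.unitaryGroup n ℂ)
    (hB : B ∈ Matrix.unitaryGroup n ℂ) (v w : n → ℝ) :
    (((A * Matrix.diagonal (fun i => (v i : ℂ)) * star A) *
      (B * Matrix.diagonal (fun j => (w j : ℂ)) * star B)).trace).re
      = ∑ i, ∑ j, v i * Complex.normSq ((star A * B) i j) * w j := by
  rw [trace_conj_mul_conj hA hB]
  rw [Complex.re_sum]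
  congr 1
  funext i
  rw [Complex.re_sum]
  congr 1
  funext j
  have : ((star A * B) i j * (((w j : ℝ) : ℂ) * star ((star A * B) i j)))
      = ((Complex.normSq ((star A * B) i j) * w j : ℝ) : ℂ) := by
    rw [mul_comm ((star A * B) i j), mul_assoc, Complex.star_def, ← Complex.normSq_eq_conj_mul_self]
    push_cast
    ring
  rw [this, ← Complex.ofReal_mul, Complex.ofReal_re]
  ring

lemma unitary_row_sum {W : Matrix n n ℂ} (hW : W ∈ Matrix.unitaryGroup n ℂ) (i : n) :
    ∑ j, Complex.normSq (W i j) = 1 := by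
  have h1 : ∑ j, ((Complex.normSq (W i j) : ℝ) : ℂ) = 1 := by
    calc ∑ j, ((Complex.normSq (W i j) : ℝ) : ℂ) = (W * star W) i i := by
          rw [Matrix.mul_apply]
          congr 1
          funext j
          rw [Matrix.star_apply, Complex.star_def, Complex.mul_conj]
      _ = 1 := by rw [mul_star_self_eq_one hW, Matrix.one_apply_eq]
  have := congrArg Complex.re h1
  simpa [Complex.re_sum] using this

lemma unitary_col_sum {W : Matrix n n ℂ} (hW : W ∈ Matrix.unitaryGroup n ℂ) (j : n) :
    ∑ i, Complex.normSq (W i j) = 1 := by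
  have h1 : ∑ i, ((Complex.normSq (W i j) : ℝ) : ℂ) = 1 := by
    calc ∑ i, ((Complex.normSq (W i j) : ℝ) : ℂ) = (star W * W) j j := by
          rw [Matrix.mul_apply]
          congr 1
          funext i
          rw [Matrix.star_apply, Complex.star_def, ← Complex.normSq_eq_conj_mul_self]
      _ = 1 := by rw [star_mul_self_eq_one hW, Matrix.one_apply_eq]
  have := congrArg Complex.re h1
  simpa [Complex.re_sum] using this

lemma klein_real (p q : n → ℝ) (P : n → n → ℝ)
    (hp : ∀ i, 0 ≤ p i) (hq : ∀ j, 0 < q j)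
    (hps : ∑ i, p i = 1) (hqs : ∑ j, q j = 1)
    (hP : ∀ i j, 0 ≤ P i j)
    (hrow : ∀ i, ∑ j, P i j = 1) (hcol : ∀ j, ∑ i, P i j = 1) :
    ∑ i, ∑ j, p i * P i j * Real.log (q j) ≤ ∑ i, p i * Real.log (p i) := by
  have key : ∀ i j, p i * P i j * Real.log (q j) - p i * P i j * Real.log (p i)
      ≤ P i j * q j - p i * P i j := by
    intro i j
    rcases eq_or_lt_of_le (hp i) with h0 | hpos
    · rw [← h0]
      simp only [zero_mul, sub_zero, zero_sub, neg_zero, sub_zero]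
      exact mul_nonneg (hP i j) (hq j).le
    · have hlog : Real.log (q j) - Real.log (p i) ≤ q j / p i - 1 := by
        rw [← Real.log_div (ne_of_gt (hq j)) (ne_of_gt hpos)]
        exact Real.log_le_sub_one_of_pos (div_pos (hq j) hpos)
      have h2 := mul_le_mul_of_nonneg_left hlog
        (mul_nonneg (le_of_lt hpos) (hP i j))
      calc p i * P i j * Real.log (q j) - p i * P i j * Real.log (p i)
          = p i * P i j * (Real.log (q j) - Real.log (p i)) := by ring
        _ ≤ p i * P i j * (q j / p i - 1) := h2
        _ = P i j * q j - p i * P i j := by field_simp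
  have hsum : ∑ i, ∑ j, (p i * P i j * Real.log (q j) - p i * P i j * Real.log (p i))
      ≤ ∑ i, ∑ j, (P i j * q j - p i * P i j) :=
    Finset.sum_le_sum (fun i _ => Finset.sum_le_sum (fun j _ => key i j))
  have hL2 : ∑ i, ∑ j, p i * P i j * Real.log (p i) = ∑ i, p i * Real.log (p i) := by
    apply Finset.sum_congr rfl
    intro i _
    calc ∑ j, p i * P i j * Real.log (p i)
        = (p i * Real.log (p i)) * ∑ j, P i j := by
          rw [Finset.mul_sum]; apply Finset.sum_congr rfl; intro j _; ring
      _ = p i * Real.log (p i) := by rw [hrow i, mul_one]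
  have hR1 : ∑ i, ∑ j, P i j * q j = 1 := by
    rw [Finset.sum_comm]
    calc ∑ j, ∑ i, P i j * q j = ∑ j, (∑ i, P i j) * q j := by
          apply Finset.sum_congr rfl; intro j _; rw [Finset.sum_mul]
      _ = ∑ j, q j := by
          apply Finset.sum_congr rfl; intro j _; rw [hcol j, one_mul]
      _ = 1 := hqs
  have hR2 : ∑ i, ∑ j, p i * P i j = 1 := by
    calc ∑ i, ∑ j, p i * P i j = ∑ i, p i * ∑ j, P i j := by
          apply Finset.sum_congr rfl; intro i _; rw [Finset.mul_sum]
      _ = ∑ i, p i := by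
          apply Finset.sum_congr rfl; intro i _; rw [hrow i, mul_one]
      _ = 1 := hps
  simp only [Finset.sum_sub_distrib] at hsum
  rw [hL2, hR1, hR2] at hsum
  linarith

lemma re_trace_of_conj {V : Matrix n n ℂ} (hV : V ∈ Matrix.unitaryGroup n ℂ)
    (v : n → ℝ) {M : Matrix n n ℂ}
    (hM : M = V * Matrix.diagonal (fun i => (v i : ℂ)) * star V) :
    (M.trace).re = ∑ i, v i := by
  rw [hM, trace_conj_diag hV, Complex.re_sum]
  exact Finset.sum_congr rfl fun i _ => Complex.ofReal_re _

lemma re_trace_conj_mul_conj_same {V : Matrix n n ℂ} (hV : V ∈ Matrix.unitaryGroup n ℂ)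
    (v w : n → ℝ) {M N : Matrix n n ℂ}
    (hM : M = V * Matrix.diagonal (fun i => (v i : ℂ)) * star V)
    (hN : N = V * Matrix.diagonal (fun i => (w i : ℂ)) * star V) :
    ((M * N).trace).re = ∑ i, v i * w i := by
  rw [hM, hN, conj_mul_conj_same hV, trace_conj_diag hV, Complex.re_sum]
  exact Finset.sum_congr rfl fun i _ => by rw [← Complex.ofReal_mul, Complex.ofReal_re]

lemma re_trace_conj_mul_conj' {A B : Matrix n n ℂ} (hA : A ∈ Matrix.unitaryGroup n ℂ)
    (hB : B ∈ Matrix.unitaryGroup n ℂ) (v w : n → ℝ) {M N : Matrix n n ℂ}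
    (hM : M = A * Matrix.diagonal (fun i => (v i : ℂ)) * star A)
    (hN : N = B * Matrix.diagonal (fun j => (w j : ℂ)) * star B) :
    ((M * N).trace).re = ∑ i, ∑ j, v i * Complex.normSq ((star A * B) i j) * w j := by
  rw [hM, hN]
  exact re_trace_conj_mul_conj hA hB v w

lemma sum_negMulLog_eq (e : n → ℝ) :
    ∑ i, Real.negMulLog (e i) = -∑ i, e i * Real.log (e i) := by
  rw [← Finset.sum_neg_distrib]
  exact Finset.sum_congr rfl fun i _ => by rw [Real.negMulLog, neg_mul]

/-- Alicki–Fannes ergotropy identity, single-copy bound: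
`Tr(Hρ) - Tr(HUρU†) ≤ β⁻¹ S(ρ‖τ_β)`, and at the iso-entropic temperature
`β = β*` the bound equals the energy gap `Tr(Hρ) - Tr(Hτ_{β*})`. -/
theorem alicki_fannes_ergotropy_bound {d : ℕ}
    (H : Matrix (Fin d) (Fin d) ℂ) (hH : H.IsHermitian)
    (hground : (∀ i, 0 ≤ hH.eigenvalues i) ∧ ∃ i, hH.eigenvalues i = 0)
    (β : ℝ) (hβ : 0 < β)
    (ρ : Matrix (Fin d) (Fin d) ℂ) (hρ : IsDensity ρ) :
    (∀ U : Matrix (Fin d) (Fin d) ℂ, IsUnitaryMat U →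
      ((H * ρ).trace).re - ((H * (U * ρ * star U)).trace).re
        ≤ β⁻¹ * relEnt ρ (gibbs β H)) ∧
    (vnEntropy (gibbs β H) = vnEntropy ρ →
      β⁻¹ * relEnt ρ (gibbs β H)
        = ((H * ρ).trace).re - ((H * gibbs β H).trace).re) := by
  obtain ⟨hρpsd, hρtr⟩ := hρ
  have hρh : ρ.IsHermitian := hρpsd.1
  have hβne : β ≠ 0 := ne_of_gt hβ
  -- opaque names for the eigendecomposition of H
  obtain ⟨U₀, hU₀eq⟩ : ∃ M, M = (hH.eigenvectorUnitary : Matrix (Fin d) (Fin d) ℂ) := ⟨_, rfl⟩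
  obtain ⟨lam, hlameq⟩ : ∃ l, l = hH.eigenvalues := ⟨_, rfl⟩
  have hU₀m : U₀ ∈ Matrix.unitaryGroup (Fin d) ℂ := by
    rw [hU₀eq]; exact hH.eigenvectorUnitary.prop
  have hHdec : H = U₀ * Matrix.diagonal (fun i => ((lam i : ℝ) : ℂ)) * star U₀ := by
    rw [hU₀eq, hlameq]; exact spectral_theorem' hH
  have hE : matFun (fun x => Real.exp (-(β * x))) H
      = U₀ * Matrix.diagonal (fun i => ((Real.exp (-(β * lam i)) : ℝ) : ℂ)) * star U₀ := by
    rw [hU₀eq, hlameq]; exact matFun_eq _ hH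
  have hZ : gibbsZ β H = ∑ i, Real.exp (-(β * lam i)) :=
    re_trace_of_conj hU₀m _ hE
  have hZpos : 0 < gibbsZ β H := by
    rw [hZ]
    obtain ⟨i0, _⟩ := hground.2
    exact Finset.sum_pos (fun i _ => Real.exp_pos _) ⟨i0, Finset.mem_univ i0⟩
  obtain ⟨q, hqeq⟩ : ∃ f : Fin d → ℝ, f = fun i => Real.exp (-(β * lam i)) / gibbsZ β H :=
    ⟨_, rfl⟩
  have hqpos : ∀ i, 0 < q i := by
    intro i; rw [hqeq]; exact div_pos (Real.exp_pos _) hZpos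
  have hqsum : ∑ i, q i = 1 := by
    rw [hqeq]
    rw [← Finset.sum_div, ← hZ, div_self (ne_of_gt hZpos)]
  have hτ : gibbs β H = U₀ * Matrix.diagonal (fun i => ((q i : ℝ) : ℂ)) * star U₀ := by
    rw [gibbs, hE]
    have hdiag : ((gibbsZ β H : ℝ) : ℂ)⁻¹ •
        Matrix.diagonal (fun i => ((Real.exp (-(β * lam i)) : ℝ) : ℂ))
        = Matrix.diagonal (fun i => ((q i : ℝ) : ℂ)) := by
      have hfun : ((gibbsZ β H : ℝ) : ℂ)⁻¹ • (fun i => ((Real.exp (-(β * lam i)) : ℝ) : ℂ))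
          = fun i => ((q i : ℝ) : ℂ) := by
        funext i
        rw [Pi.smul_apply, smul_eq_mul, hqeq, inv_mul_eq_div, ← Complex.ofReal_div]
      rw [← Matrix.diagonal_smul, hfun]
    rw [← hdiag, Matrix.mul_smul, smul_mul_assoc]
  have hlogq : ∀ i, Real.log (q i) = -(β * lam i) - Real.log (gibbsZ β H) := by
    intro i
    rw [hqeq]
    rw [Real.log_div (Real.exp_ne_zero _) (ne_of_gt hZpos), Real.log_exp]
  have hlogτ : matFun Real.log (gibbs β H)
      = U₀ * Matrix.diagonal (fun i => ((Real.log (q i) : ℝ) : ℂ)) * star U₀ := by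
    rw [hτ]; exact matFun_conj _ hU₀m q
  -- the matrix identity log τ = -β•H - log Z•1
  have hlogτ' : matFun Real.log (gibbs β H)
      = ((-β : ℝ) : ℂ) • H - ((Real.log (gibbsZ β H) : ℝ) : ℂ) • (1 : Matrix (Fin d) (Fin d) ℂ) := by
    rw [hlogτ]
    have h1 : (fun i => ((Real.log (q i) : ℝ) : ℂ))
        = fun i => ((-β : ℝ) : ℂ) * ((lam i : ℝ) : ℂ) - ((Real.log (gibbsZ β H) : ℝ) : ℂ) := by
      funext i
      rw [hlogq i]
      push_cast
      ring
    rw [h1]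
    have h2 : Matrix.diagonal
        (fun i => ((-β : ℝ) : ℂ) * ((lam i : ℝ) : ℂ) - ((Real.log (gibbsZ β H) : ℝ) : ℂ))
        = ((-β : ℝ) : ℂ) • Matrix.diagonal (fun i => ((lam i : ℝ) : ℂ))
          - ((Real.log (gibbsZ β H) : ℝ) : ℂ) • (1 : Matrix (Fin d) (Fin d) ℂ) := by
      have e1 : Matrix.diagonal (fun i => ((-β : ℝ) : ℂ) * ((lam i : ℝ) : ℂ))
          = ((-β : ℝ) : ℂ) • Matrix.diagonal (fun i => ((lam i : ℝ) : ℂ)) := by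
        have hf : (fun i => ((-β : ℝ) : ℂ) * ((lam i : ℝ) : ℂ))
            = ((-β : ℝ) : ℂ) • (fun i => ((lam i : ℝ) : ℂ)) := by
          funext i; simp
        rw [hf, Matrix.diagonal_smul]
      have e2 : Matrix.diagonal (fun _ : Fin d => ((Real.log (gibbsZ β H) : ℝ) : ℂ))
          = ((Real.log (gibbsZ β H) : ℝ) : ℂ) • (1 : Matrix (Fin d) (Fin d) ℂ) := by
        have hf : (fun _ : Fin d => ((Real.log (gibbsZ β H) : ℝ) : ℂ))
            = ((Real.log (gibbsZ β H) : ℝ) : ℂ) • (fun _ : Fin d => (1 : ℂ)) := by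
          funext i; simp
        rw [hf, Matrix.diagonal_smul, Matrix.diagonal_one]
      rw [← Matrix.diagonal_sub, e1, e2]
    rw [h2, Matrix.mul_sub, Matrix.sub_mul]
    congr 1
    · rw [Matrix.mul_smul, smul_mul_assoc, ← hHdec]
    · rw [Matrix.mul_smul, smul_mul_assoc, Matrix.mul_one, mul_star_self_eq_one hU₀m]
  -- trace of σ · log τ for normalized σ
  have hlogτ_trace : ∀ σ : Matrix (Fin d) (Fin d) ℂ, σ.trace = 1 →
      ((σ * matFun Real.log (gibbs β H)).trace).re
        = -β * ((σ * H).trace).re - Real.log (gibbsZ β H) := by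
    intro σ hσtr
    rw [hlogτ', Matrix.mul_sub, Matrix.trace_sub, Complex.sub_re,
      Matrix.mul_smul, Matrix.trace_smul, Matrix.mul_smul, Matrix.trace_smul,
      Matrix.mul_one, hσtr]
    simp [Complex.re_ofReal_mul]
  -- eigendecomposition of ρ
  obtain ⟨A, hAeq⟩ : ∃ M, M = (hρh.eigenvectorUnitary : Matrix (Fin d) (Fin d) ℂ) := ⟨_, rfl⟩
  obtain ⟨p, hpeq⟩ : ∃ l, l = hρh.eigenvalues := ⟨_, rfl⟩
  have hAm : A ∈ Matrix.unitaryGroup (Fin d) ℂ := by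
    rw [hAeq]; exact hρh.eigenvectorUnitary.prop
  have hρdec : ρ = A * Matrix.diagonal (fun i => ((p i : ℝ) : ℂ)) * star A := by
    rw [hAeq, hpeq]; exact spectral_theorem' hρh
  have hlogρ : matFun Real.log ρ
      = A * Matrix.diagonal (fun i => ((Real.log (p i) : ℝ) : ℂ)) * star A := by
    rw [hAeq, hpeq]; exact matFun_eq _ hρh
  have hpnn : ∀ i, 0 ≤ p i := by
    intro i; rw [hpeq]; exact hρpsd.eigenvalues_nonneg i
  have hpsum : ∑ i, p i = 1 := by
    have h1 := re_trace_of_conj hAm p hρdec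
    rw [hρtr] at h1
    simpa using h1.symm
  have hSρ : ((ρ * matFun Real.log ρ).trace).re = ∑ i, p i * Real.log (p i) :=
    re_trace_conj_mul_conj_same hAm p (fun i => Real.log (p i)) hρdec hlogρ
  have hrel : relEnt ρ (gibbs β H)
      = (∑ i, p i * Real.log (p i)) + β * ((ρ * H).trace).re + Real.log (gibbsZ β H) := by
    rw [relEnt, Matrix.mul_sub, Matrix.trace_sub, Complex.sub_re, hSρ,
      hlogτ_trace ρ hρtr]
    ring
  -- Klein's inequality
  have hklein : ∀ σ : Matrix (Fin d) (Fin d) ℂ, σ.PosSemidef → σ.trace = 1 →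
      ((σ * matFun Real.log (gibbs β H)).trace).re
        ≤ ((σ * matFun Real.log σ).trace).re := by
    intro σ hσp hσtr
    have hσh : σ.IsHermitian := hσp.1
    obtain ⟨B, hBeq⟩ : ∃ M, M = (hσh.eigenvectorUnitary : Matrix (Fin d) (Fin d) ℂ) := ⟨_, rfl⟩
    obtain ⟨r, hreq⟩ : ∃ l, l = hσh.eigenvalues := ⟨_, rfl⟩
    have hBm : B ∈ Matrix.unitaryGroup (Fin d) ℂ := by
      rw [hBeq]; exact hσh.eigenvectorUnitary.prop
    have hσdec : σ = B * Matrix.diagonal (fun i => ((r i : ℝ) : ℂ)) * star B := by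
      rw [hBeq, hreq]; exact spectral_theorem' hσh
    have hlogσ : matFun Real.log σ
        = B * Matrix.diagonal (fun i => ((Real.log (r i) : ℝ) : ℂ)) * star B := by
      rw [hBeq, hreq]; exact matFun_eq _ hσh
    have hrnn : ∀ i, 0 ≤ r i := by
      intro i; rw [hreq]; exact hσp.eigenvalues_nonneg i
    have hrsum : ∑ i, r i = 1 := by
      have h1 := re_trace_of_conj hBm r hσdec
      rw [hσtr] at h1
      simpa using h1.symm
    have hRHS : ((σ * matFun Real.log σ).trace).re = ∑ i, r i * Real.log (r i) :=
      re_trace_conj_mul_conj_same hBm r (fun i => Real.log (r i)) hσdec hlogσ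
    have hLHS : ((σ * matFun Real.log (gibbs β H)).trace).re
        = ∑ i, ∑ j, r i * Complex.normSq ((star B * U₀) i j) * Real.log (q j) :=
      re_trace_conj_mul_conj' hBm hU₀m r (fun j => Real.log (q j)) hσdec hlogτ
    rw [hRHS, hLHS]
    have hWm : star B * U₀ ∈ Matrix.unitaryGroup (Fin d) ℂ :=
      mul_mem (Unitary.star_mem hBm) hU₀m
    exact klein_real r q (fun i j => Complex.normSq ((star B * U₀) i j)) hrnn hqpos
      hrsum hqsum (fun i j => Complex.normSq_nonneg _)
      (fun i => unitary_row_sum hWm i) (fun j => unitary_col_sum hWm j)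
  constructor
  · -- Part 1
    intro U hU
    have hUm : U ∈ Matrix.unitaryGroup (Fin d) ℂ := hU
    have hσp : (U * ρ * star U).PosSemidef := by
      rw [Matrix.star_eq_conjTranspose]
      exact hρpsd.mul_mul_conjTranspose_same U
    have hσtr : (U * ρ * star U).trace = 1 := by
      rw [trace_unitary_conj hUm, hρtr]
    have hUAm : U * A ∈ Matrix.unitaryGroup (Fin d) ℂ := mul_mem hUm hAm
    have hσdec2 : U * ρ * star U
        = (U * A) * Matrix.diagonal (fun i => ((p i : ℝ) : ℂ)) * star (U * A) := by
      conv_lhs => rw [hρdec]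
      rw [Matrix.star_mul]
      simp only [Matrix.mul_assoc]
    have hlogσ2 : matFun Real.log (U * ρ * star U)
        = (U * A) * Matrix.diagonal (fun i => ((Real.log (p i) : ℝ) : ℂ)) * star (U * A) := by
      rw [hσdec2]; exact matFun_conj _ hUAm p
    have hσlog : (((U * ρ * star U) * matFun Real.log (U * ρ * star U)).trace).re
        = ∑ i, p i * Real.log (p i) :=
      re_trace_conj_mul_conj_same hUAm p (fun i => Real.log (p i)) hσdec2 hlogσ2
    have hk := hklein (U * ρ * star U) hσp hσtr
    rw [hσlog, hlogτ_trace _ hσtr] at hk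
    rw [hrel, Matrix.trace_mul_comm H ρ, Matrix.trace_mul_comm H (U * ρ * star U)]
    have expand : ∀ X : ℝ, β⁻¹ * ((∑ i, p i * Real.log (p i)) + β * X + Real.log (gibbsZ β H))
        = β⁻¹ * (∑ i, p i * Real.log (p i)) + X + β⁻¹ * Real.log (gibbsZ β H) := by
      intro X
      field_simp
    rw [expand]
    have key2 : 0 ≤ (∑ i, p i * Real.log (p i)) + β * (((U * ρ * star U) * H).trace).re
        + Real.log (gibbsZ β H) := by linarith
    have key3 := mul_nonneg (inv_nonneg.mpr hβ.le) key2
    rw [expand] at key3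
    linarith
  · -- Part 2
    intro hent
    have hτh : (gibbs β H).IsHermitian := by
      rw [hτ]; exact conj_diag_isHermitian hU₀m q
    have hvρ : vnEntropy ρ = -∑ i, p i * Real.log (p i) := by
      rw [vnEntropy, dif_pos hρh, ← hpeq, sum_negMulLog_eq]
    have hvτ1 : ((gibbs β H * matFun Real.log (gibbs β H)).trace).re
        = ∑ j, q j * Real.log (q j) :=
      re_trace_conj_mul_conj_same hU₀m q (fun j => Real.log (q j)) hτ hlogτ
    obtain ⟨B, hBeq⟩ : ∃ M, M = (hτh.eigenvectorUnitary : Matrix (Fin d) (Fin d) ℂ) := ⟨_, rfl⟩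
    obtain ⟨r, hreq⟩ : ∃ l, l = hτh.eigenvalues := ⟨_, rfl⟩
    have hBm : B ∈ Matrix.unitaryGroup (Fin d) ℂ := by
      rw [hBeq]; exact hτh.eigenvectorUnitary.prop
    have hτdec : gibbs β H = B * Matrix.diagonal (fun i => ((r i : ℝ) : ℂ)) * star B := by
      rw [hBeq, hreq]; exact spectral_theorem' hτh
    have hlogτ2 : matFun Real.log (gibbs β H)
        = B * Matrix.diagonal (fun i => ((Real.log (r i) : ℝ) : ℂ)) * star B := by
      rw [hBeq, hreq]; exact matFun_eq _ hτh
    have hvτ2 : ((gibbs β H * matFun Real.log (gibbs β H)).trace).re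
        = ∑ j, r j * Real.log (r j) :=
      re_trace_conj_mul_conj_same hBm r (fun j => Real.log (r j)) hτdec hlogτ2
    have hvτ : vnEntropy (gibbs β H) = -∑ j, q j * Real.log (q j) := by
      rw [vnEntropy, dif_pos hτh, ← hreq, sum_negMulLog_eq, ← hvτ2, hvτ1]
    have hGτ : ((gibbs β H * H).trace).re = ∑ j, q j * lam j :=
      re_trace_conj_mul_conj_same hU₀m q lam hτ hHdec
    have hsum_qlogq : ∑ j, q j * Real.log (q j)
        = -β * (∑ j, q j * lam j) - Real.log (gibbsZ β H) := by
      calc ∑ j, q j * Real.log (q j)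
          = ∑ j, (-β * (q j * lam j) - Real.log (gibbsZ β H) * q j) := by
            apply Finset.sum_congr rfl
            intro j _
            rw [hlogq j]
            ring
        _ = -β * (∑ j, q j * lam j) - Real.log (gibbsZ β H) := by
            rw [Finset.sum_sub_distrib, ← Finset.mul_sum, ← Finset.mul_sum, hqsum, mul_one]
    have hS : (∑ i, p i * Real.log (p i))
        = -β * (((gibbs β H * H).trace).re) - Real.log (gibbsZ β H) := by
      rw [hvτ] at hent
      rw [hvρ] at hent
      rw [hGτ]
      rw [hsum_qlogq] at hent
      linarith
    rw [hrel, hS, Matrix.trace_mul_comm H ρ, Matrix.trace_mul_comm H (gibbs β H)]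
    field_simp
    ring

end
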